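/- Outcome of the Maker-Breaker domination game on complete bipartite graphs: for n ≥ m ≥ 1, o(K_{m,n}) = D if (m = n = 1) or (m ≥ 2 and n ≥ 2), and o(K_{1,n}) = N for n ≥ 2 (the first player wins in both the D-game and S-game on a star). -/
import Mathlib


open SimpleGraph

namespace MBD

variable {V : Type*}

/-- Dominator's claimed set `D` is a dominating set of `G`. -/
def Dominates (G : SimpleGraph V) (D : Finset V) : Prop :=
  ∀ v : V, ∃ d ∈ D, d = v ∨ G.Adj d v

/-- Staller's claimed set `S` contains the whole closed neighborhood of some vertex. -/
def StallerWinSet (G : SimpleGraph V) (S : Finset V) : Prop :=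
  ∃ v : V, ∀ u : V, (u = v ∨ G.Adj u v) → u ∈ S

variable [DecidableEq V]

mutual
  /-- `DomD G k D S`: with Dominator having claimed `D`, Staller `S`, and Dominator to
  move, Dominator has a strategy winning the Maker-Breaker domination game on `G`
  using at most `k` further moves of his own. -/
  inductive DomD (G : SimpleGraph V) : ℕ → Finset V → Finset V → Prop
    | win {k : ℕ} {D S : Finset V} : Dominates G D → DomD G k D S
    | move {k : ℕ} {D S : Finset V} (v : V) : v ∉ D → v ∉ S →
        DomS G k (insert v D) S → DomD G (k + 1) D S
  /-- Like `DomD`, but it is Staller's turn to move. -/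
  inductive DomS (G : SimpleGraph V) : ℕ → Finset V → Finset V → Prop
    | win {k : ℕ} {D S : Finset V} : Dominates G D → DomS G k D S
    | move {k : ℕ} {D S : Finset V} : (∃ v : V, v ∉ D ∧ v ∉ S) →
        (∀ v : V, v ∉ D → v ∉ S → DomD G k D (insert v S)) → DomS G k D S
end

mutual
  /-- `StallD G k D S`: with Dominator having claimed `D`, Staller `S`, and Dominator to
  move, Staller has a strategy winning (claiming a whole closed neighborhood) within at
  most `k` further moves of her own. -/
  inductive StallD (G : SimpleGraph V) : ℕ → Finset V → Finset V → Prop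
    | win {k : ℕ} {D S : Finset V} : StallerWinSet G S → StallD G k D S
    | move {k : ℕ} {D S : Finset V} : (∃ v : V, v ∉ D ∧ v ∉ S) →
        (∀ v : V, v ∉ D → v ∉ S → StallS G k (insert v D) S) → StallD G k D S
  /-- Like `StallD`, but it is Staller's turn to move. -/
  inductive StallS (G : SimpleGraph V) : ℕ → Finset V → Finset V → Prop
    | win {k : ℕ} {D S : Finset V} : StallerWinSet G S → StallS G k D S
    | move {k : ℕ} {D S : Finset V} (v : V) : v ∉ D → v ∉ S →
        StallD G k D (insert v S) → StallS G (k + 1) D S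
end

/-- Dominator has a winning strategy in the D-game (Dominator starts). -/
def DominatorWinsD (G : SimpleGraph V) : Prop := ∃ k, DomD G k ∅ ∅

/-- Dominator has a winning strategy in the S-game (Staller starts). -/
def DominatorWinsS (G : SimpleGraph V) : Prop := ∃ k, DomS G k ∅ ∅

/-- Staller has a winning strategy in the D-game (Dominator starts). -/
def StallerWinsD (G : SimpleGraph V) : Prop := ∃ k, StallD G k ∅ ∅

/-- Staller has a winning strategy in the S-game (Staller starts). -/
def StallerWinsS (G : SimpleGraph V) : Prop := ∃ k, StallS G k ∅ ∅

/-- Outcome `𝒟`: Dominator wins both the D-game and the S-game. -/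
def outcomeD (G : SimpleGraph V) : Prop := DominatorWinsD G ∧ DominatorWinsS G

/-- Outcome `𝒮`: Staller wins both the D-game and the S-game. -/
def outcomeS (G : SimpleGraph V) : Prop := StallerWinsD G ∧ StallerWinsS G

/-- Outcome `𝒩`: the first player wins in both games. -/
def outcomeN (G : SimpleGraph V) : Prop := DominatorWinsD G ∧ StallerWinsS G

/-- `γ_MB(G)`: the minimum number of Dominator's moves needed to win the D-game,
`∞` if he has no winning strategy. -/
noncomputable def gMB (G : SimpleGraph V) : ℕ∞ :=
  sInf ((fun k : ℕ => (k : ℕ∞)) '' {k | DomD G k ∅ ∅})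

/-- `γ_MB'(G)`: the minimum number of Dominator's moves needed to win the S-game. -/
noncomputable def gMB' (G : SimpleGraph V) : ℕ∞ :=
  sInf ((fun k : ℕ => (k : ℕ∞)) '' {k | DomS G k ∅ ∅})

/-- `γ_SMB(G)`: the minimum number of Staller's moves needed to win the D-game. -/
noncomputable def gSMB (G : SimpleGraph V) : ℕ∞ :=
  sInf ((fun k : ℕ => (k : ℕ∞)) '' {k | StallD G k ∅ ∅})

/-- `γ_SMB'(G)`: the minimum number of Staller's moves needed to win the S-game. -/
noncomputable def gSMB' (G : SimpleGraph V) : ℕ∞ :=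
  sInf ((fun k : ℕ => (k : ℕ∞)) '' {k | StallS G k ∅ ∅})

end MBD

section Aux
open MBD Sum

variable {m n : ℕ}

private lemma adjLR (a : Fin m) (b : Fin n) :
    (completeBipartiteGraph (Fin m) (Fin n)).Adj (inl a) (inr b) := by simp

private lemma adjRL (a : Fin m) (b : Fin n) :
    (completeBipartiteGraph (Fin m) (Fin n)).Adj (inr b) (inl a) := by simp

private lemma domPair {a : Fin m} {b : Fin n} {D : Finset (Fin m ⊕ Fin n)}
    (ha : inl a ∈ D) (hb : inr b ∈ D) :
    Dominates (completeBipartiteGraph (Fin m) (Fin n)) D := by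
  rintro (x | y)
  · exact ⟨inr b, hb, Or.inr (adjRL x b)⟩
  · exact ⟨inl a, ha, Or.inr (adjLR a y)⟩

private lemma domCenter {a : Fin 1} {D : Finset (Fin 1 ⊕ Fin n)} (ha : inl a ∈ D) :
    Dominates (completeBipartiteGraph (Fin 1) (Fin n)) D := by
  rintro (x | y)
  · exact ⟨inl a, ha, Or.inl (by rw [Subsingleton.elim a x])⟩
  · exact ⟨inl a, ha, Or.inr (adjLR a y)⟩

private lemma dom11 {v : Fin 1 ⊕ Fin 1} {D : Finset (Fin 1 ⊕ Fin 1)} (hv : v ∈ D) :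
    Dominates (completeBipartiteGraph (Fin 1) (Fin 1)) D := by
  rintro (x | y) <;> rcases v with a | b
  · exact ⟨inl a, hv, Or.inl (by rw [Subsingleton.elim a x])⟩
  · exact ⟨inr b, hv, Or.inr (adjRL x b)⟩
  · exact ⟨inl a, hv, Or.inr (adjLR a y)⟩
  · exact ⟨inr b, hv, Or.inl (by rw [Subsingleton.elim b y])⟩

private lemma domAllL {D : Finset (Fin m ⊕ Fin n)} (hm : 0 < m)
    (h : ∀ x : Fin m, inl x ∈ D) :
    Dominates (completeBipartiteGraph (Fin m) (Fin n)) D := by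
  rintro (x | y)
  · exact ⟨inl x, h x, Or.inl rfl⟩
  · exact ⟨inl ⟨0, hm⟩, h _, Or.inr (adjLR _ y)⟩

end Aux


/-- Outcome on complete bipartite graphs, `n ≥ m ≥ 1`: `o(K_{m,n}) = 𝒟` if `m = n = 1`
or `m, n ≥ 2`, and `o(K_{1,n}) = 𝒩` if `n ≥ 2`. -/

theorem stmt_17 (m n : ℕ) (hm : 1 ≤ m) (hmn : m ≤ n) :
    ((m = 1 ∧ n = 1) ∨ (2 ≤ m ∧ 2 ≤ n) →
      MBD.outcomeD (completeBipartiteGraph (Fin m) (Fin n))) ∧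
    (m = 1 ∧ 2 ≤ n → MBD.outcomeN (completeBipartiteGraph (Fin m) (Fin n))) := by
  open Sum MBD in
  constructor
  · rintro (⟨hm1, hn1⟩ | ⟨hm2, hn2⟩)
    · subst hm1; subst hn1
      constructor
      · exact ⟨1, .move (inl 0) (by simp) (by simp)
          (.win (dom11 (v := inl 0) (by simp)))⟩
      · refine ⟨1, .move ⟨inl 0, by simp, by simp⟩ fun v hvD hvS => ?_⟩
        by_cases h : v = inl 0
        · exact .move (inr 0) (by simp) (by simp [h])
            (.win (dom11 (v := inr 0) (by simp)))
        · exact .move (inl 0) (by simp) (by simp [Ne.symm h])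
            (.win (dom11 (v := inl 0) (by simp)))
    · -- 2 ≤ m, 2 ≤ n
      have hm0 : (0 : ℕ) < m := by omega
      have hm1' : (1 : ℕ) < m := by omega
      have hn0 : (0 : ℕ) < n := by omega
      have hn1' : (1 : ℕ) < n := by omega
      constructor
      · -- D-game: Dominator plays inl 0, then a free inr vertex
        refine ⟨2, .move (inl ⟨0, hm0⟩) (by simp) (by simp)
          (.move ⟨inr ⟨0, hn0⟩, by simp, by simp⟩ fun v hvD hvS => ?_)⟩
        by_cases h : v = inr ⟨0, hn0⟩
        · exact .move (inr ⟨1, hn1'⟩) (by simp) (by simp [h])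
            (.win (domPair (a := ⟨0, hm0⟩) (b := ⟨1, hn1'⟩) (by simp) (by simp)))
        · exact .move (inr ⟨0, hn0⟩) (by simp) (by simp [Ne.symm h])
            (.win (domPair (a := ⟨0, hm0⟩) (b := ⟨0, hn0⟩) (by simp) (by simp)))
      · -- S-game
        refine ⟨2, .move ⟨inl ⟨0, hm0⟩, by simp, by simp⟩ fun v1 hv1D hv1S => ?_⟩
        obtain ⟨a, ha⟩ : ∃ a : Fin m, inl a ≠ v1 := by
          by_cases h : v1 = inl ⟨0, hm0⟩
          · exact ⟨⟨1, hm1'⟩, by simp [h]⟩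
          · exact ⟨⟨0, hm0⟩, Ne.symm h⟩
        obtain ⟨bw, hbw⟩ : ∃ b : Fin n, inr b ≠ v1 := by
          by_cases h : v1 = inr ⟨0, hn0⟩
          · exact ⟨⟨1, hn1'⟩, by simp [h]⟩
          · exact ⟨⟨0, hn0⟩, Ne.symm h⟩
        refine .move (inl a) (by simp) (by simp [ha])
          (.move ⟨inr bw, by simp, by simp [hbw]⟩ fun v2 hv2D hv2S => ?_)
        have hv2a : v2 ≠ inl a := by
          intro h; apply hv2D; simp [h]
        have hv21 : v2 ≠ v1 := by
          intro h; apply hv2S; simp [h]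
        by_cases hfree : ∃ b : Fin n, inr b ≠ v1 ∧ inr b ≠ v2
        · obtain ⟨b, hb1, hb2⟩ := hfree
          exact .move (inr b) (by simp) (by simp [hb1, hb2])
            (.win (domPair (a := a) (b := b) (by simp) (by simp)))
        · push_neg at hfree
          have hcov : ∀ b : Fin n, inr b = v1 ∨ inr b = v2 := fun b => by
            by_cases h : (inr b : Fin m ⊕ Fin n) = v1
            · exact Or.inl h
            · exact Or.inr (hfree b h)
          have hn2 : n ≤ 2 := by
            by_contra hn3
            push_neg at hn3
            have h0 := hcov ⟨0, by omega⟩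
            have h1 := hcov ⟨1, by omega⟩
            have h2 := hcov ⟨2, by omega⟩
            rcases h0 with h0 | h0 <;> rcases h1 with h1 | h1 <;> rcases h2 with h2 | h2 <;>
              first
                | exact absurd (h0.trans h1.symm) (by simp)
                | exact absurd (h0.trans h2.symm) (by simp)
                | exact absurd (h1.trans h2.symm) (by simp)
          have hm2 : m = 2 := by omega
          obtain ⟨c1, hc1⟩ : ∃ c, v1 = inr c := by
            rcases hcov ⟨0, by omega⟩ with h | h <;> rcases hcov ⟨1, by omega⟩ with h' | h'
            · exact ⟨_, h.symm⟩
            · exact ⟨_, h.symm⟩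
            · exact ⟨_, h'.symm⟩
            · exact absurd (h.trans h'.symm) (by simp)
          obtain ⟨c2, hc2⟩ : ∃ c, v2 = inr c := by
            rcases hcov ⟨0, by omega⟩ with h | h <;> rcases hcov ⟨1, by omega⟩ with h' | h'
            · exact absurd (h.trans h'.symm) (by simp)
            · exact ⟨_, h'.symm⟩
            · exact ⟨_, h.symm⟩
            · exact ⟨_, h.symm⟩
          obtain ⟨a', ha'⟩ : ∃ a' : Fin m, a' ≠ a := by
            refine ⟨⟨1 - a.val, by omega⟩, fun h => ?_⟩
            have h2 : 1 - a.val = a.val := by simpa using congrArg Fin.val h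
            have h3 := a.2
            omega
          refine .move (inl a') (by simp [ha']) (by simp [hc1, hc2]) (.win (domAllL hm0 ?_))
          intro x
          have hx : x = a' ∨ x = a := by
            have h1 : a'.val ≠ a.val := fun h => ha' (Fin.ext h)
            have h2 := x.2
            have h3 := a.2
            have h4 := a'.2
            have : x.val = a'.val ∨ x.val = a.val := by omega
            rcases this with h | h
            · exact Or.inl (Fin.ext h)
            · exact Or.inr (Fin.ext h)
          rcases hx with rfl | rfl <;> simp
  · rintro ⟨hm1, hn2⟩
    subst hm1
    have hn0 : (0 : ℕ) < n := by omega
    have hn1' : (1 : ℕ) < n := by omega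
    constructor
    · exact ⟨1, .move (inl 0) (by simp) (by simp) (.win (domCenter (a := 0) (by simp)))⟩
    · -- Staller plays the center then a free leaf
      refine ⟨2, .move (inl 0) (by simp) (by simp)
        (.move ⟨inr ⟨0, hn0⟩, by simp, by simp⟩ fun v hvD hvS => ?_)⟩
      obtain ⟨b, hb⟩ : ∃ b : Fin n, inr b ≠ v := by
        by_cases h : v = inr ⟨0, hn0⟩
        · exact ⟨⟨1, hn1'⟩, by simp [h]⟩
        · exact ⟨⟨0, hn0⟩, Ne.symm h⟩
      refine .move (inr b) (by simp [hb]) (by simp) (.win ⟨inr b, ?_⟩)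
      rintro (x | y) (h | h)
      · simp at h
      · simp [Subsingleton.elim x 0]
      · simp [h]
      · simp at h
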